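/- Let z : ℝ → ℝ³ be differentiable and ω : ℝ → ℝ³ be continuous, satisfying ż + ω × z − ω × e₃ − λ e₃ × z = 0 for all t ≥ 0 (where e₃ is the third standard basis vector and λ ∈ ℝ). Then the quantity z(t)·z(t) − 2 z(t)·e₃ is constant in time. -/
import Mathlib


open Matrix

/-- `e₃ = (0,0,1)`. -/
noncomputable def e3 : Fin 3 → ℝ := ![0, 0, 1]

/-- If `ż + ω × z − ω × e₃ − λ e₃ × z = 0` for all `t ≥ 0`, then
`z·z − 2 z·e₃` is constant in time (for `t ≥ 0`). -/
theorem stmt0 (lam : ℝ) (z ω : ℝ → (Fin 3 → ℝ))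
    (hz : Differentiable ℝ z) (hω : Continuous ω)
    (heq : ∀ t : ℝ, 0 ≤ t →
      deriv z t + crossProduct (ω t) (z t) - crossProduct (ω t) e3
        - lam • crossProduct e3 (z t) = 0) :
    ∀ t : ℝ, 0 ≤ t →
      z t ⬝ᵥ z t - 2 * (z t ⬝ᵥ e3) = z 0 ⬝ᵥ z 0 - 2 * (z 0 ⬝ᵥ e3) := by
  set g : ℝ → ℝ := fun s => z s ⬝ᵥ z s - 2 * (z s ⬝ᵥ e3) with hg
  have hgeq : ∀ s : ℝ, g s = z s 0 * z s 0 + z s 1 * z s 1 + z s 2 * z s 2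
      - 2 * z s 2 := by
    intro s
    simp [hg, dotProduct, Fin.sum_univ_three, e3]
  have hcomp : ∀ (s : ℝ) (i : Fin 3),
      HasDerivAt (fun u => z u i) (deriv z s i) s := by
    intro s i
    exact (hasDerivAt_pi.1 (hz s).hasDerivAt) i
  have hderiv : ∀ s : ℝ, 0 ≤ s → HasDerivAt g 0 s := by
    intro s hs
    have h0 := congrFun (heq s hs) 0
    have h1 := congrFun (heq s hs) 1
    have h2 := congrFun (heq s hs) 2
    simp [crossProduct, e3, Matrix.vecHead, Matrix.vecTail, Function.comp] at h0 h1 h2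
    have hD : HasDerivAt g (2 * (deriv z s 0) * z s 0 + 2 * (deriv z s 1) * z s 1
        + 2 * (deriv z s 2) * z s 2 - 2 * deriv z s 2) s := by
      have : HasDerivAt (fun u => z u 0 * z u 0 + z u 1 * z u 1 + z u 2 * z u 2
          - 2 * z u 2)
          (deriv z s 0 * z s 0 + z s 0 * deriv z s 0
            + (deriv z s 1 * z s 1 + z s 1 * deriv z s 1)
            + (deriv z s 2 * z s 2 + z s 2 * deriv z s 2)
            - 2 * deriv z s 2) s := by
        exact ((((hcomp s 0).mul (hcomp s 0)).add
          ((hcomp s 1).mul (hcomp s 1))).add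
          ((hcomp s 2).mul (hcomp s 2))).sub ((hcomp s 2).const_mul 2)
      have heq' : g = fun u => z u 0 * z u 0 + z u 1 * z u 1 + z u 2 * z u 2
          - 2 * z u 2 := funext hgeq
      rw [heq']
      convert this using 1
      ring
    convert hD using 1
    linear_combination (-2 * z s 0) * h0 + (-2 * z s 1) * h1 + (2 - 2 * z s 2) * h2
  intro t ht
  have hcont : ContinuousOn g (Set.Icc 0 t) := by
    have hc : ∀ i : Fin 3, Continuous fun x => z x i :=
      fun i => (continuous_apply i).comp hz.continuous
    have : Continuous g := by
      simp only [funext hgeq]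
      exact ((((hc 0).mul (hc 0)).add ((hc 1).mul (hc 1))).add
        ((hc 2).mul (hc 2))).sub (continuous_const.mul (hc 2))
    exact this.continuousOn
  have := constant_of_has_deriv_right_zero hcont
    (fun x hx => ((hderiv x hx.1).hasDerivWithinAt)) t (Set.mem_Icc.2 ⟨ht, le_refl t⟩)
  simpa [hg] using this
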